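/- arXiv:2108.12872 — 2 statements merged into one kernel-verified Lean document; each statement's English description precedes it below -/
import Mathlib

section
/- Submultiplicativity of the control parameters: let q be a positive integer and A, B, d, ε > 0 with A ≤ 1 and B ε^q ≤ 1. For 0 ≤ k ≤ q define Φ_k = A d^{−k} + B ε^{q−k}, and assume Φ_j ≤ ε^{−j} for all 0 ≤ j ≤ q. Then for all nonnegative integers k, k′ with k + k′ ≤ q, Φ_k · Φ_{k′} ≤ 4 Φ_{k+k′}. -/
/-- Submultiplicativity of the control parameters `Φ_k = A d^{−k} + B ε^{q−k}`:
under `A ≤ 1`, `B ε^q ≤ 1` and `Φ_j ≤ ε^{−j}` for `j ≤ q`, one has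
`Φ_k Φ_{k′} ≤ 4 Φ_{k+k′}` whenever `k + k′ ≤ q`. -/
theorem control_parameter_submultiplicative (q : ℕ) (hq : 0 < q)
    (A B d ε : ℝ) (hA : 0 < A) (hB : 0 < B) (hd : 0 < d) (hε : 0 < ε)
    (hA1 : A ≤ 1) (hBq : B * ε ^ q ≤ 1)
    (hΦ : ∀ j ≤ q, A / d ^ j + B * ε ^ (q - j) ≤ 1 / ε ^ j) :
    ∀ k k' : ℕ, k + k' ≤ q →
      (A / d ^ k + B * ε ^ (q - k)) * (A / d ^ k' + B * ε ^ (q - k')) ≤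
        4 * (A / d ^ (k + k') + B * ε ^ (q - (k + k'))) := by
  intro k k' hkk'
  have hk : k ≤ q := by omega
  have hk' : k' ≤ q := by omega
  have hεk : (0:ℝ) < ε ^ k := pow_pos hε k
  have hAk : A / d ^ k ≤ 1 / ε ^ k := by
    have h1 := hΦ k hk
    have h2 : 0 < B * ε ^ (q - k) := by positivity
    linarith
  have hAk' : A / d ^ k' ≤ 1 / ε ^ k' := by
    have h1 := hΦ k' hk'
    have h2 : 0 < B * ε ^ (q - k') := by positivity
    linarith
  have hsplit1 : ε ^ (q - k') = ε ^ k * ε ^ (q - (k + k')) := by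
    rw [← pow_add]; congr 1; omega
  have hsplit2 : ε ^ (q - k) = ε ^ k' * ε ^ (q - (k + k')) := by
    rw [← pow_add]; congr 1; omega
  have hsplitq : ε ^ (q - k) * ε ^ (q - k') = ε ^ q * ε ^ (q - (k + k')) := by
    rw [← pow_add, ← pow_add]; congr 1; omega
  have t1 : A / d ^ k * (A / d ^ k') ≤ A / d ^ (k + k') := by
    rw [div_mul_div_comm, ← pow_add]
    gcongr
    nlinarith
  have t2 : A / d ^ k * (B * ε ^ (q - k')) ≤ B * ε ^ (q - (k + k')) := by
    have h := mul_le_mul_of_nonneg_right hAk (by positivity : (0:ℝ) ≤ B * ε ^ (q - k'))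
    have e : 1 / ε ^ k * (B * ε ^ (q - k')) = B * ε ^ (q - (k + k')) := by
      rw [hsplit1]; field_simp
    linarith
  have t3 : B * ε ^ (q - k) * (A / d ^ k') ≤ B * ε ^ (q - (k + k')) := by
    have h := mul_le_mul_of_nonneg_right hAk' (by positivity : (0:ℝ) ≤ B * ε ^ (q - k))
    have e : 1 / ε ^ k' * (B * ε ^ (q - k)) = B * ε ^ (q - (k + k')) := by
      rw [hsplit2]; field_simp
    nlinarith
  have t4 : B * ε ^ (q - k) * (B * ε ^ (q - k')) ≤ B * ε ^ (q - (k + k')) := by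
    have e : B * ε ^ (q - k) * (B * ε ^ (q - k')) = (B * ε ^ q) * (B * ε ^ (q - (k + k'))) := by
      rw [mul_mul_mul_comm, hsplitq]; ring
    rw [e]
    have h := mul_le_mul_of_nonneg_right hBq (by positivity : (0:ℝ) ≤ B * ε ^ (q - (k + k')))
    linarith
  have hX : (0:ℝ) ≤ A / d ^ (k + k') := by positivity
  have hY : (0:ℝ) ≤ B * ε ^ (q - (k + k')) := by positivity
  nlinarith [t1, t2, t3, t4, hX, hY]
end

section
/- Partial fraction decomposition with nonpositive residues: let n ≥ 1, let x₁ < x₂ < … < x_m be reals with x_{i+1} − x_i ≥ 1/n for all i, and let e₁, …, e_m ∈ {0, 1}. Then, as an identity of rational functions, ∏ᵢ₌₁^m (z − xᵢ − eᵢ/n)/(z − xᵢ) = 1 + Σᵢ₌₁^m Rᵢ/(z − xᵢ), where Rᵢ = −(eᵢ/n) ∏_{j ≠ i} (xᵢ − x_j − e_j/n)/(xᵢ − x_j), and moreover Rᵢ ≤ 0 for every i. -/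
open Polynomial Finset

/-- Partial fraction decomposition with nonpositive residues for the jump factor of
non-intersecting Bernoulli walkers: with particles separated by at least `1/n` and
`e ∈ {0,1}^m`, one has `∏ᵢ (z − xᵢ − eᵢ/n)/(z − xᵢ) = 1 + Σᵢ Rᵢ/(z − xᵢ)` where
`Rᵢ = −(eᵢ/n) ∏_{j ≠ i} (xᵢ − x_j − e_j/n)/(xᵢ − x_j) ≤ 0`. -/
theorem bernoulli_jump_partial_fraction (n : ℕ) (hn : 1 ≤ n) (m : ℕ)
    (x e : Fin m → ℝ) (he : ∀ i, e i = 0 ∨ e i = 1)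
    (hgap : ∀ (i : Fin m) (hi : (i : ℕ) + 1 < m), 1 / (n : ℝ) ≤ x ⟨(i : ℕ) + 1, hi⟩ - x i) :
    (∀ z : ℂ, (∀ i, z ≠ (x i : ℂ)) →
      ∏ i, (z - (x i : ℂ) - ((e i / n : ℝ) : ℂ)) / (z - (x i : ℂ)) =
        1 + ∑ i, ((-(e i / n) *
            ∏ j ∈ Finset.univ.erase i, (x i - x j - e j / n) / (x i - x j) : ℝ) : ℂ)
          / (z - (x i : ℂ))) ∧
    ∀ i : Fin m,
      -(e i / n) * ∏ j ∈ Finset.univ.erase i, (x i - x j - e j / n) / (x i - x j) ≤ 0 := by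
  have hn0 : (0:ℝ) < n := by exact_mod_cast hn
  have hn1 : (0:ℝ) < 1 / n := by positivity
  -- gap lemma
  have key : ∀ (k : ℕ) (a b : Fin m), (b:ℕ) = (a:ℕ) + k + 1 → x a + 1/n ≤ x b := by
    intro k
    induction k with
    | zero =>
      intro a b hb
      have hb' : (a:ℕ) + 1 < m := by have := b.isLt; omega
      have hbe : b = ⟨(a:ℕ) + 1, hb'⟩ := Fin.ext (by simpa using hb)
      have := hgap a hb'
      rw [hbe]; linarith
    | succ k ih =>
      intro a b hb
      have hmid : (a:ℕ) + k + 1 < m := by have := b.isLt; omega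
      set c : Fin m := ⟨(a:ℕ) + k + 1, hmid⟩ with hc
      have h1 := ih a c rfl
      have hb' : (c:ℕ) + 1 < m := by have := b.isLt; simp [hc]; omega
      have hbe : b = ⟨(c:ℕ) + 1, hb'⟩ := Fin.ext (by simp [hc]; omega)
      have h2 := hgap c hb'
      rw [hbe]; linarith
  have key' : ∀ a b : Fin m, (a:ℕ) < (b:ℕ) → x a + 1/n ≤ x b := by
    intro a b hab
    exact key ((b:ℕ) - (a:ℕ) - 1) a b (by omega)
  -- sign part
  have hsign : ∀ i : Fin m,
      -(e i / n) * ∏ j ∈ Finset.univ.erase i, (x i - x j - e j / n) / (x i - x j) ≤ 0 := by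
    intro i
    apply mul_nonpos_of_nonpos_of_nonneg
    · have h0 : 0 ≤ e i := by rcases he i with h | h <;> simp [h]
      have : 0 ≤ e i / n := by positivity
      linarith
    · apply Finset.prod_nonneg
      intro j hj
      have hji : j ≠ i := Finset.ne_of_mem_erase hj
      have hej0 : 0 ≤ e j := by rcases he j with h | h <;> simp [h]
      have hej1 : e j ≤ 1 := by rcases he j with h | h <;> simp [h]
      have hejn : e j / n ≤ 1 / n := by
        gcongr
      rcases lt_or_gt_of_ne (fun h : (j:ℕ) = (i:ℕ) => hji (Fin.ext h)) with h | h
      · have hk := key' j i h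
        have hejn' : e j / n ≤ 1 / n := hejn
        apply div_nonneg <;> linarith
      · have hk := key' i j h
        have he0 : 0 ≤ e j / n := by positivity
        have h1 : x i - x j - e j / n ≤ 0 := by linarith
        have h2 : x i - x j ≤ 0 := by linarith
        have := div_nonneg (neg_nonneg.2 h1) (neg_nonneg.2 h2)
        rwa [neg_div_neg_eq] at this
  refine ⟨?_, hsign⟩
  intro z hz
  rcases Nat.eq_zero_or_pos m with hm | hm
  · subst hm; simp
  -- distinctness
  have hne : ∀ i j : Fin m, i ≠ j → x i ≠ x j := by
    intro i j hij
    rcases lt_or_gt_of_ne (fun h : (i:ℕ) = (j:ℕ) => hij (Fin.ext h)) with h | h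
    · have := key' i j h; intro hx; linarith
    · have := key' j i h; intro hx; linarith
  have hXinj : Function.Injective (fun i : Fin m => ((x i : ℝ) : ℂ)) := by
    intro i j hij
    by_contra hij'
    exact hne i j hij' (Complex.ofReal_injective (by simpa using hij))
  -- residues
  set R : Fin m → ℝ := fun i =>
    -(e i / n) * ∏ j ∈ Finset.univ.erase i, (x i - x j - e j / n) / (x i - x j) with hR
  -- real evaluation identity
  have hreal : ∀ k : Fin m,
      ∏ j, (x k - x j - e j / n) = R k * ∏ j ∈ Finset.univ.erase k, (x k - x j) := by
    intro k
    rw [← Finset.mul_prod_erase Finset.univ _ (Finset.mem_univ k)]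
    have h1 : x k - x k - e k / n = -(e k / n) := by ring
    rw [h1, hR, mul_assoc]
    congr 1
    rw [← Finset.prod_mul_distrib]
    apply Finset.prod_congr rfl
    intro j hj
    have : x k - x j ≠ 0 := sub_ne_zero.mpr (hne k j (Finset.ne_of_mem_erase hj).symm)
    field_simp
  -- polynomial identity
  set A : Fin m → ℂ := fun i => (x i : ℂ) + ((e i / n : ℝ) : ℂ) with hA
  set P : ℂ[X] := ∏ i, (X - C (A i)) with hP
  set Q : ℂ[X] := ∏ i, (X - C ((x i : ℝ) : ℂ)) with hQ
  set S : ℂ[X] := ∑ i, C ((R i : ℝ) : ℂ) * ∏ j ∈ Finset.univ.erase i, (X - C ((x j : ℝ) : ℂ))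
    with hS
  have hPm : P.Monic := monic_prod_of_monic _ _ fun i _ => monic_X_sub_C _
  have hQm : Q.Monic := monic_prod_of_monic _ _ fun i _ => monic_X_sub_C _
  have hPdeg : P.natDegree = m := by
    rw [hP, natDegree_prod _ _ fun i _ => X_sub_C_ne_zero _]
    simp
  have hQdeg : Q.natDegree = m := by
    rw [hQ, natDegree_prod _ _ fun i _ => X_sub_C_ne_zero _]
    simp
  have hPQ : (P - Q).natDegree < m := by
    rcases eq_or_ne P Q with h | h
    · simp [h, hm]
    · have hdP : P.degree = (m : ℕ) := by rw [degree_eq_natDegree hPm.ne_zero, hPdeg]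
      have hdQ : Q.degree = (m : ℕ) := by rw [degree_eq_natDegree hQm.ne_zero, hQdeg]
      have hlt : (P - Q).degree < (m : ℕ) := by
        have := degree_sub_lt (hdP.trans hdQ.symm) hPm.ne_zero
          (by simp [hPm.leadingCoeff, hQm.leadingCoeff])
        rwa [hdP] at this
      exact (natDegree_lt_iff_degree_lt (sub_ne_zero.mpr h)).mpr hlt
  have hSdeg : S.natDegree < m := by
    have : S.natDegree ≤ m - 1 := by
      apply natDegree_sum_le_of_forall_le
      intro i _
      apply le_trans (natDegree_mul_le)
      have : (∏ j ∈ Finset.univ.erase i, (X - C ((x j : ℝ) : ℂ))).natDegree ≤ m - 1 := by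
        apply le_trans (natDegree_prod_le _ _)
        have : ∀ j ∈ Finset.univ.erase i, (X - C ((x j : ℝ) : ℂ)).natDegree = 1 := by
          intro j _; exact natDegree_X_sub_C _
        rw [Finset.sum_congr rfl this]
        simp [Finset.card_erase_of_mem]
      simpa using this
    omega
  have hD : P - Q - S = 0 := by
    apply eq_zero_of_natDegree_lt_card_of_eval_eq_zero _ hXinj
    · intro k
      have hQe : Q.eval ((x k : ℝ) : ℂ) = 0 := by
        rw [hQ]
        simp only [eval_prod, eval_sub, eval_X, eval_C]
        exact Finset.prod_eq_zero (Finset.mem_univ k) (by simp)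
      have hSe : S.eval ((x k : ℝ) : ℂ)
          = ((R k : ℝ) : ℂ) * ∏ j ∈ Finset.univ.erase k, (((x k : ℝ) : ℂ) - ((x j : ℝ) : ℂ)) := by
        rw [hS]
        simp only [eval_finset_sum, eval_mul, eval_prod, eval_sub, eval_X, eval_C]
        rw [Finset.sum_eq_single k]
        · intro i _ hik
          apply mul_eq_zero_of_right
          exact Finset.prod_eq_zero (Finset.mem_erase.mpr ⟨hik.symm, Finset.mem_univ k⟩) (by simp)
        · intro h; exact absurd (Finset.mem_univ k) h
      have hPe : P.eval ((x k : ℝ) : ℂ) = ∏ j, (((x k : ℝ) : ℂ) - A j) := by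
        rw [hP]; simp [eval_prod]
      rw [eval_sub, eval_sub, hPe, hQe, hSe]
      have := hreal k
      have hcast : (∏ j, (((x k : ℝ) : ℂ) - A j))
          = ((∏ j, (x k - x j - e j / n) : ℝ) : ℂ) := by
        push_cast [hA]
        apply Finset.prod_congr rfl
        intro j _
        ring
      rw [hcast, this]
      push_cast
      ring
    · rw [Fintype.card_fin]
      exact lt_of_le_of_lt (natDegree_sub_le _ _) (max_lt hPQ hSdeg)
  -- evaluate at z
  have hzne : ∀ i : Fin m, z - ((x i : ℝ) : ℂ) ≠ 0 := fun i => sub_ne_zero.mpr (hz i)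
  have hprodne : (∏ i, (z - ((x i : ℝ) : ℂ))) ≠ 0 :=
    Finset.prod_ne_zero_iff.mpr fun i _ => hzne i
  have hev : ∏ i, (z - A i)
      = (∏ i, (z - ((x i : ℝ) : ℂ)))
        + ∑ i, ((R i : ℝ) : ℂ) * ∏ j ∈ Finset.univ.erase i, (z - ((x j : ℝ) : ℂ)) := by
    have h0 : P.eval z = Q.eval z + S.eval z := by
      have : P = Q + S := by linear_combination (norm := ring_nf) hD
      rw [this, eval_add]
    simpa [hP, hQ, hS, eval_prod, eval_finset_sum] using h0
  have hgoal0 : ∀ i : Fin m, z - ((x i : ℝ) : ℂ) - ((e i / n : ℝ) : ℂ) = z - A i := by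
    intro i; rw [hA]; ring
  calc ∏ i, (z - ((x i : ℝ) : ℂ) - ((e i / n : ℝ) : ℂ)) / (z - ((x i : ℝ) : ℂ))
      = (∏ i, (z - A i)) / ∏ i, (z - ((x i : ℝ) : ℂ)) := by
        rw [← Finset.prod_div_distrib]
        exact Finset.prod_congr rfl fun i _ => by rw [hgoal0 i]
    _ = 1 + ∑ i, ((R i : ℝ) : ℂ) / (z - ((x i : ℝ) : ℂ)) := by
        rw [hev, div_eq_iff hprodne, add_mul, one_mul, Finset.sum_mul]
        congr 1
        apply Finset.sum_congr rfl
        intro i _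
        rw [div_mul_eq_mul_div, ← Finset.mul_prod_erase Finset.univ _ (Finset.mem_univ i),
          mul_comm (z - ((x i : ℝ) : ℂ)), ← mul_assoc,
          mul_div_assoc, div_self (hzne i), mul_one]
end
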